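/- arXiv:1812.09163 — 3 statements merged into one kernel-verified Lean document; each statement's English description precedes it below -/
import Mathlib

section
/- Let K be a real quadratic field and x, y ∈ K two irrational elements (i.e., not in ℚ). Then there exist a natural number k and elements x₀ = x, x₁, ..., x_k = y of K \ ℚ such that for each i, the ℤ-lattices Λ_{x_i} = ℤ·1 ⊕ ℤ·x_i and Λ_{x_{i+1}} satisfy: one is contained in the other with prime index. -/
section HeckeAux

variable {K : Type*} [Field K] [Algebra ℚ K]

lemma hecke_charZeroK : CharZero K :=
  charZero_of_injective_algebraMap (algebraMap ℚ K).injective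

/-- the map `(m,n) ↦ m + n z` -/
noncomputable def phiz (z : K) : ℤ × ℤ →ₗ[ℤ] K where
  toFun mn := (mn.1 : K) + (mn.2 : K) * z
  map_add' a b := by simp only [Prod.fst_add, Prod.snd_add]; push_cast; ring
  map_smul' c a := by
    have h : (c • a) = (c * a.1, c * a.2) := rfl
    rw [h]; simp only [RingHom.id_apply, zsmul_eq_mul]; push_cast; ring

lemma phiz_inj (z : K) (hz : z ∉ Set.range (algebraMap ℚ K)) :
    Function.Injective (phiz z) := by
  haveI : CharZero K := hecke_charZeroK
  have key : ∀ m n : ℤ, (m : K) + (n : K) * z = 0 → m = 0 ∧ n = 0 := by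
    intro m n h
    rcases eq_or_ne n 0 with hn | hn
    · subst hn
      simp only [Int.cast_zero, zero_mul, add_zero, Int.cast_eq_zero] at h
      exact ⟨h, rfl⟩
    · exfalso
      apply hz
      refine ⟨(-m : ℚ) / (n : ℚ), ?_⟩
      have hnK : (n : K) ≠ 0 := Int.cast_ne_zero.mpr hn
      have e1 : algebraMap ℚ K ((-m : ℚ) / (n : ℚ)) = (-(m:K)) / (n : K) := by
        rw [map_div₀]
        congr 1 <;> simp
      rw [e1, eq_comm, eq_div_iff hnK]
      linear_combination h
  intro a b hab
  have : ((a.1 - b.1 : ℤ) : K) + ((a.2 - b.2 : ℤ) : K) * z = 0 := by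
    simp only [phiz, LinearMap.coe_mk, AddHom.coe_mk] at hab
    push_cast
    linear_combination hab
  obtain ⟨h1, h2⟩ := key _ _ this
  have e1 : a.1 = b.1 := by omega
  have e2 : a.2 = b.2 := by omega
  exact Prod.ext e1 e2

omit [Algebra ℚ K] in
lemma phiz_range (z : K) :
    LinearMap.range (phiz z) = Submodule.span ℤ ({1, z} : Set K) := by
  apply le_antisymm
  · rintro _ ⟨⟨m, n⟩, rfl⟩
    have : (phiz z) (m, n) = m • (1 : K) + n • z := by
      simp [phiz, zsmul_eq_mul]
    rw [this]
    exact Submodule.add_mem _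
      (Submodule.smul_mem _ _ (Submodule.subset_span (by simp)))
      (Submodule.smul_mem _ _ (Submodule.subset_span (by simp)))
  · rw [Submodule.span_le]
    rintro w (rfl | rfl)
    · exact ⟨(1, 0), by simp [phiz]⟩
    · exact ⟨(0, 1), by simp [phiz]⟩

omit [Algebra ℚ K] in
lemma hecke_key_span (z w : K) (p : ℕ) (e a : ℤ) (he : e = 1 ∨ e = -1)
    (hw : w = (e : K) * (p : K) * z + (a : K)) :
    Submodule.span ℤ ({1, w} : Set K) =
      Submodule.map (phiz z) ((⊤ : Submodule ℤ ℤ).prod (Ideal.span {(p : ℤ)})) := by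
  apply le_antisymm
  · rw [Submodule.span_le]
    rintro v (rfl | rfl)
    · exact ⟨(1, 0), by simp [Ideal.mem_span_singleton], by simp [phiz]⟩
    · refine ⟨(a, e * p), by simp [Ideal.mem_span_singleton, Dvd.intro], ?_⟩
      simp only [phiz, LinearMap.coe_mk, AddHom.coe_mk]
      rw [hw]; push_cast; ring
  · rintro _ ⟨⟨m, c⟩, ⟨-, hc⟩, rfl⟩
    simp only [SetLike.mem_coe, Ideal.mem_span_singleton] at hc
    obtain ⟨n, rfl⟩ := hc
    have he2 : (e : K) * e = 1 := by rcases he with rfl | rfl <;> norm_num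
    have expand : (phiz z) (m, (p : ℤ) * n) = (m - n * e * a) • (1 : K) + (n * e) • w := by
      simp only [phiz, LinearMap.coe_mk, AddHom.coe_mk, zsmul_eq_mul, hw]
      push_cast
      linear_combination (-(p : K) * (n : K) * z) * he2
    rw [expand]
    exact Submodule.add_mem _
      (Submodule.smul_mem _ _ (Submodule.subset_span (by simp)))
      (Submodule.smul_mem _ _ (Submodule.subset_span (by simp)))

lemma hecke_key (z w : K) (hz : z ∉ Set.range (algebraMap ℚ K)) (p : ℕ) (hp : p.Prime)
    (e a : ℤ) (he : e = 1 ∨ e = -1)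
    (hw : w = (e : K) * (p : K) * z + (a : K)) :
    Submodule.span ℤ ({1, w} : Set K) ≤ Submodule.span ℤ ({1, z} : Set K) ∧
    Nat.card ((Submodule.span ℤ ({1, z} : Set K)) ⧸
      ((Submodule.span ℤ ({1, w} : Set K)).comap
        (Submodule.span ℤ ({1, z} : Set K)).subtype)) = p := by
  set L := Submodule.span ℤ ({1, z} : Set K) with hL
  set S := Submodule.span ℤ ({1, w} : Set K) with hS
  set T := (⊤ : Submodule ℤ ℤ).prod (Ideal.span {(p : ℤ)}) with hT
  have hST : S = Submodule.map (phiz z) T := hecke_key_span z w p e a he hw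
  have hle : S ≤ L := by
    rw [hST]
    rintro _ ⟨t, -, rfl⟩
    show phiz z t ∈ Submodule.span ℤ ({1, z} : Set K)
    rw [← phiz_range z]
    exact ⟨t, rfl⟩
  refine ⟨hle, ?_⟩
  let E : (ℤ × ℤ) ≃ₗ[ℤ] L :=
    (LinearEquiv.ofInjective (phiz z) (phiz_inj z hz)).trans
      (LinearEquiv.ofEq _ _ (phiz_range z))
  have hmap : Submodule.map (E : (ℤ × ℤ) →ₗ[ℤ] L) T = S.comap L.subtype := by
    ext v
    constructor
    · rintro ⟨t, ht, rfl⟩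
      simp only [Submodule.mem_comap, Submodule.coe_subtype]
      have hmem : (phiz z) t ∈ Submodule.map (phiz z) T := ⟨t, ht, rfl⟩
      rw [hST]
      exact hmem
    · intro hv
      simp only [Submodule.mem_comap, Submodule.coe_subtype, hST] at hv
      obtain ⟨t, ht, htv⟩ := hv
      exact ⟨t, ht, Subtype.ext htv⟩
  let Q := Submodule.Quotient.equiv T (S.comap L.subtype) E hmap
  let π : ℤ × ℤ →ₗ[ℤ] ZMod p := {
    toFun := fun v => (v.2 : ZMod p)
    map_add' := fun a b => by simp only [Prod.snd_add]; push_cast; ring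
    map_smul' := fun c a => by
      have h : (c • a) = (c * a.1, c * a.2) := rfl
      rw [h]; simp only [RingHom.id_apply, zsmul_eq_mul]; push_cast; ring }
  have hker : LinearMap.ker π = T := by
    ext v
    simp only [LinearMap.mem_ker, LinearMap.coe_mk, AddHom.coe_mk, hT, Submodule.mem_prod,
      Submodule.mem_top, true_and, Ideal.mem_span_singleton]
    exact ZMod.intCast_zmod_eq_zero_iff_dvd v.2 p
  have hsurj : Function.Surjective π := by
    intro c
    obtain ⟨n, rfl⟩ := ZMod.intCast_surjective c
    exact ⟨(0, n), rfl⟩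
  let Q2 := π.quotKerEquivOfSurjective hsurj
  rw [← Nat.card_zmod p]
  exact (Nat.card_congr Q.toEquiv.symm).trans
    (Nat.card_congr ((hker ▸ Q2 : ((ℤ × ℤ) ⧸ T) ≃ₗ[ℤ] ZMod p)).toEquiv)

/-- `c₀` and `c₁` are Hecke neighbors. -/
def Nbr (c₀ c₁ : K) : Prop :=
  ∃ p : ℕ, p.Prime ∧
    ((Submodule.span ℤ ({1, c₀} : Set K) ≤ Submodule.span ℤ ({1, c₁} : Set K) ∧
        Nat.card ((Submodule.span ℤ ({1, c₁} : Set K)) ⧸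
          ((Submodule.span ℤ ({1, c₀} : Set K)).comap
            (Submodule.span ℤ ({1, c₁} : Set K)).subtype)) = p) ∨
     (Submodule.span ℤ ({1, c₁} : Set K) ≤ Submodule.span ℤ ({1, c₀} : Set K) ∧
        Nat.card ((Submodule.span ℤ ({1, c₀} : Set K)) ⧸
          ((Submodule.span ℤ ({1, c₁} : Set K)).comap
            (Submodule.span ℤ ({1, c₀} : Set K)).subtype)) = p))

/-- neighbor relation among irrationals -/
def Rnb (a b : K) : Prop :=
  a ∉ Set.range (algebraMap ℚ K) ∧ b ∉ Set.range (algebraMap ℚ K) ∧ Nbr a b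

lemma irr_aux (x w : K) (hx : x ∉ Set.range (algebraMap ℚ K)) (u v A : ℤ)
    (hu : u ≠ 0) (_hv : v ≠ 0) (h : (v : K) * w = (u : K) * x + (A : K)) :
    w ∉ Set.range (algebraMap ℚ K) := by
  haveI : CharZero K := hecke_charZeroK
  rintro ⟨q, hq⟩
  apply hx
  refine ⟨((v : ℚ) * q - (A : ℚ)) / (u : ℚ), ?_⟩
  have huK : (u : K) ≠ 0 := Int.cast_ne_zero.mpr hu
  have e : algebraMap ℚ K (((v : ℚ) * q - (A : ℚ)) / (u : ℚ))
      = ((v : K) * algebraMap ℚ K q - (A : K)) / (u : K) := by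
    rw [map_div₀, map_sub, map_mul]
    congr 2 <;> simp
  rw [e, eq_comm, eq_div_iff huK, hq]
  linear_combination -h

lemma step_R (z w : K) (hz : z ∉ Set.range (algebraMap ℚ K)) (p : ℕ) (hp : p.Prime)
    (e a : ℤ) (he : e = 1 ∨ e = -1) (hw : w = (e : K) * (p : K) * z + (a : K)) :
    Rnb z w ∧ Rnb w z := by
  have hep : (e * p : ℤ) ≠ 0 := by
    have : (p : ℤ) ≠ 0 := by exact_mod_cast hp.pos.ne'
    rcases he with rfl | rfl <;> simpa
  have hwirr : w ∉ Set.range (algebraMap ℚ K) := by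
    refine irr_aux z w hz (e * p) 1 a hep one_ne_zero ?_
    rw [hw]; push_cast; ring
  obtain ⟨hle, hcard⟩ := hecke_key z w hz p hp e a he hw
  exact ⟨⟨hz, hwirr, p, hp, Or.inr ⟨hle, hcard⟩⟩, ⟨hwirr, hz, p, hp, Or.inl ⟨hle, hcard⟩⟩⟩

lemma hecke_reach : ∀ n : ℕ, ∀ (U A W : ℤ) (x y : K), x ∉ Set.range (algebraMap ℚ K) →
    U ≠ 0 → W ≠ 0 → (W : K) * y = (U : K) * x + (A : K) → U.natAbs + W.natAbs ≤ n →
    Relation.ReflTransGen Rnb x y := by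
  intro n
  induction n with
  | zero =>
    intro U A W x y _ hU hW _ hle
    have h1 := Int.natAbs_pos.mpr hU
    have h2 := Int.natAbs_pos.mpr hW
    omega
  | succ n ih =>
    intro U A W x y hx hU hW heq hle
    have hyirr : y ∉ Set.range (algebraMap ℚ K) := irr_aux x y hx U W A hU hW heq
    by_cases hW2 : 2 ≤ W.natAbs
    · -- divide W by a prime
      set p := W.natAbs.minFac with hpdef
      have hp : p.Prime := Nat.minFac_prime (by omega)
      have hdvd : (p : ℤ) ∣ W :=
        dvd_trans (Int.natCast_dvd_natCast.mpr (Nat.minFac_dvd _)) (Int.natAbs_dvd.mpr dvd_rfl)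
      obtain ⟨W', hW'⟩ := hdvd
      have hW'0 : W' ≠ 0 := by rintro rfl; rw [mul_zero] at hW'; exact hW hW'
      have heq' : (W' : K) * ((p : K) * y) = (U : K) * x + (A : K) := by
        rw [← heq, hW']; push_cast; ring
      have hmeas : U.natAbs + W'.natAbs ≤ n := by
        have hWabs : W.natAbs = p * W'.natAbs := by
          rw [hW', Int.natAbs_mul]; simp
        have hp2 : 2 ≤ p := hp.two_le
        have h1 : 1 ≤ W'.natAbs := Int.natAbs_pos.mpr hW'0
        have : W'.natAbs < W.natAbs := by nlinarith
        omega
      have hreach := ih U A W' x ((p : K) * y) hx hU hW'0 heq' hmeas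
      have hstep := step_R y ((p : K) * y) hyirr p hp 1 0 (Or.inl rfl) (by push_cast; ring)
      exact hreach.tail hstep.2
    · have hWabs1 : W.natAbs = 1 := by
        have := Int.natAbs_pos.mpr hW; omega
      have hW1 : W = 1 ∨ W = -1 := Int.natAbs_eq_iff.mp hWabs1
      set U₂ := W * U with hU₂def
      set A₂ := W * A with hA₂def
      have hU₂ : U₂ ≠ 0 := mul_ne_zero hW hU
      have hWW : (W : K) * (W : K) = 1 := by
        rcases hW1 with rfl | rfl <;> norm_num
      have heq2 : y = (U₂ : K) * x + (A₂ : K) := by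
        rw [hU₂def, hA₂def]
        push_cast
        linear_combination (W : K) * heq - y * hWW
      have hU₂abs : U₂.natAbs = U.natAbs := by
        rw [hU₂def, Int.natAbs_mul, hWabs1, one_mul]
      by_cases hU2 : 2 ≤ U₂.natAbs
      · -- divide U by a prime
        set p := U₂.natAbs.minFac with hpdef
        have hp : p.Prime := Nat.minFac_prime (by omega)
        have hdvd : (p : ℤ) ∣ U₂ :=
          dvd_trans (Int.natCast_dvd_natCast.mpr (Nat.minFac_dvd _)) (Int.natAbs_dvd.mpr dvd_rfl)
        obtain ⟨U', hU'⟩ := hdvd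
        have hU'0 : U' ≠ 0 := by rintro rfl; rw [mul_zero] at hU'; exact hU₂ hU'
        have heq' : ((1 : ℤ) : K) * ((U' : K) * x) = (U' : K) * x + ((0 : ℤ) : K) := by
          push_cast; ring
        have hmeas : U'.natAbs + (1 : ℤ).natAbs ≤ n := by
          have hUabs : U₂.natAbs = p * U'.natAbs := by
            rw [hU', Int.natAbs_mul]; simp
          have hp2 : 2 ≤ p := hp.two_le
          have h1 : 1 ≤ U'.natAbs := Int.natAbs_pos.mpr hU'0
          have : U'.natAbs < U₂.natAbs := by nlinarith
          simp only [Int.natAbs_one]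
          omega
        have hreach := ih U' 0 1 x ((U' : K) * x) hx hU'0 one_ne_zero heq' hmeas
        have hy'irr : ((U' : K) * x) ∉ Set.range (algebraMap ℚ K) :=
          irr_aux x _ hx U' 1 0 hU'0 one_ne_zero (by push_cast; ring)
        have hstep := step_R ((U' : K) * x) y hy'irr p hp 1 A₂ (Or.inl rfl)
          (by rw [heq2, hU']; push_cast; ring)
        exact hreach.tail hstep.1
      · -- |U₂| = 1 : two steps via 2y
        have hU₂1 : U₂ = 1 ∨ U₂ = -1 := by
          have h1 := Int.natAbs_pos.mpr hU₂
          have habs : U₂.natAbs = 1 := by omega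
          exact Int.natAbs_eq_iff.mp habs
        have hstep1 := step_R x ((2 : ℕ) * y : K) hx 2 Nat.prime_two U₂ (2 * A₂) hU₂1
          (by rw [heq2]; push_cast; ring)
        have hstep2 := step_R y ((2 : ℕ) * y : K) hyirr 2 Nat.prime_two 1 0 (Or.inl rfl)
          (by push_cast; ring)
        exact (Relation.ReflTransGen.single hstep1.1).tail hstep2.2

lemma chain_of_rtg {a b : K} (h : Relation.ReflTransGen Rnb a b)
    (ha : a ∉ Set.range (algebraMap ℚ K)) :
    ∃ (k : ℕ) (c : ℕ → K), c 0 = a ∧ c k = b ∧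
      (∀ i ≤ k, c i ∉ Set.range (algebraMap ℚ K)) ∧
      ∀ i < k, Nbr (c i) (c (i + 1)) := by
  induction h with
  | refl => exact ⟨0, fun _ => a, rfl, rfl, fun i _ => ha, fun i hi => absurd hi (by omega)⟩
  | @tail b' c' _ hbc ih =>
    obtain ⟨k, f, h0, hk, hirr, hstep⟩ := ih
    refine ⟨k + 1, fun i => if i ≤ k then f i else c', ?_, ?_, ?_, ?_⟩
    · simp [Nat.zero_le]; exact h0
    · simp
    · intro i hi
      by_cases hik : i ≤ k
      · simpa [hik] using hirr i hik
      · simpa [hik] using hbc.2.1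
    · intro i hi
      by_cases hik : i < k
      · have e1 : i ≤ k := by omega
        have e2 : i + 1 ≤ k := by omega
        simpa [e1, e2] using hstep i hik
      · have e3 : i = k := by omega
        have e4 : ¬ (i + 1 ≤ k) := by omega
        have e5 : i ≤ k := by omega
        simpa [e5, e4, e3, hk] using hbc.2.2

end HeckeAux

/-- Let `K` be a real quadratic field and `x, y ∈ K` two irrational elements. Then there
exist `k ∈ ℕ` and elements `x₀ = x, x₁, …, x_k = y` of `K \ ℚ` such that for each `i` the
`ℤ`-lattices `Λ_{x_i} = ℤ·1 + ℤ·x_i` and `Λ_{x_{i+1}}` satisfy: one is contained in the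
other with prime index (`p_i`-Hecke neighbors). -/
theorem stmt_9 (K : Type*) [Field K] [Algebra ℚ K] [FiniteDimensional ℚ K]
    (h2 : Module.finrank ℚ K = 2) (σ : K →+* ℝ)
    (x y : K)
    (hx : x ∉ Set.range (algebraMap ℚ K)) (hy : y ∉ Set.range (algebraMap ℚ K)) :
    ∃ (k : ℕ) (c : ℕ → K), c 0 = x ∧ c k = y ∧
      (∀ i ≤ k, c i ∉ Set.range (algebraMap ℚ K)) ∧
      ∀ i < k, ∃ p : ℕ, p.Prime ∧
        ((Submodule.span ℤ ({1, c i} : Set K) ≤ Submodule.span ℤ ({1, c (i + 1)} : Set K) ∧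
            Nat.card ((Submodule.span ℤ ({1, c (i + 1)} : Set K)) ⧸
              ((Submodule.span ℤ ({1, c i} : Set K)).comap
                (Submodule.span ℤ ({1, c (i + 1)} : Set K)).subtype)) = p) ∨
         (Submodule.span ℤ ({1, c (i + 1)} : Set K) ≤ Submodule.span ℤ ({1, c i} : Set K) ∧
            Nat.card ((Submodule.span ℤ ({1, c i} : Set K)) ⧸
              ((Submodule.span ℤ ({1, c (i + 1)} : Set K)).comap
                (Submodule.span ℤ ({1, c i} : Set K)).subtype)) = p)) := by
  have hinj := (algebraMap ℚ K).injective
  have hnli : ¬ LinearIndependent ℚ ![1, x, y] := by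
    intro h
    have := h.fintype_card_le_finrank
    rw [h2] at this
    simp at this
  obtain ⟨g, hsum, i0, hi0⟩ := Fintype.not_linearIndependent_iff.mp hnli
  rw [Fin.sum_univ_three] at hsum
  simp only [Matrix.cons_val_zero, Matrix.cons_val_one, Matrix.head_cons,
    Matrix.cons_val_two, Matrix.tail_cons] at hsum
  rw [Algebra.smul_def, Algebra.smul_def, Algebra.smul_def, mul_one] at hsum
  have hg2 : g 2 ≠ 0 := by
    intro h20
    rw [h20, map_zero, zero_mul, add_zero] at hsum
    have hg1 : g 1 = 0 := by
      by_contra h10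
      apply hx
      refine ⟨-(g 0) / g 1, ?_⟩
      have h1K : algebraMap ℚ K (g 1) ≠ 0 := fun hc => h10 (hinj (by rw [hc, map_zero]))
      rw [map_div₀, map_neg, eq_comm, eq_div_iff h1K]
      linear_combination hsum
    rw [hg1, map_zero, zero_mul, add_zero] at hsum
    have hg0 : g 0 = 0 := hinj (by rw [hsum, map_zero])
    fin_cases i0 <;> simp_all
  have hg1 : g 1 ≠ 0 := by
    intro h10
    apply hy
    rw [h10, map_zero, zero_mul, add_zero] at hsum
    refine ⟨-(g 0) / g 2, ?_⟩
    have h2K : algebraMap ℚ K (g 2) ≠ 0 := fun hc => hg2 (hinj (by rw [hc, map_zero]))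
    rw [map_div₀, map_neg, eq_comm, eq_div_iff h2K]
    linear_combination hsum
  have h2K : algebraMap ℚ K (g 2) ≠ 0 := fun hc => hg2 (hinj (by rw [hc, map_zero]))
  set q1 : ℚ := -(g 1) / g 2 with hq1def
  set q0 : ℚ := -(g 0) / g 2 with hq0def
  have hq1 : q1 ≠ 0 := div_ne_zero (neg_ne_zero.mpr hg1) hg2
  have hy_eq : y = algebraMap ℚ K q1 * x + algebraMap ℚ K q0 := by
    apply mul_left_cancel₀ h2K
    have e1 : g 2 * q1 = -(g 1) := by rw [hq1def]; field_simp
    have e0 : g 2 * q0 = -(g 0) := by rw [hq0def]; field_simp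
    rw [mul_add, ← mul_assoc, ← map_mul, ← map_mul, e1, e0, map_neg, map_neg]
    linear_combination hsum
  set U : ℤ := q1.num * (q0.den : ℤ) with hUdef
  set A : ℤ := q0.num * (q1.den : ℤ) with hAdef
  set W : ℤ := (q1.den : ℤ) * (q0.den : ℤ) with hWdef
  have hd1 : (q1.den : ℤ) ≠ 0 := by exact_mod_cast q1.den_nz
  have hd0 : (q0.den : ℤ) ≠ 0 := by exact_mod_cast q0.den_nz
  have hU0 : U ≠ 0 := mul_ne_zero (Rat.num_ne_zero.mpr hq1) hd0
  have hW0 : W ≠ 0 := mul_ne_zero hd1 hd0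
  have eW1 : (W : ℚ) * q1 = (U : ℚ) := by
    rw [hWdef, hUdef]; push_cast
    linear_combination (q0.den : ℚ) * Rat.mul_den_eq_num q1
  have eW0 : (W : ℚ) * q0 = (A : ℚ) := by
    rw [hWdef, hAdef]; push_cast
    linear_combination (q1.den : ℚ) * Rat.mul_den_eq_num q0
  have hWy : (W : K) * y = (U : K) * x + (A : K) := by
    have c1 : ∀ n : ℤ, ((n : ℤ) : K) = algebraMap ℚ K ((n : ℤ) : ℚ) :=
      fun n => (map_intCast (algebraMap ℚ K) n).symm
    rw [hy_eq, c1 W, c1 U, c1 A, mul_add, ← mul_assoc, ← map_mul, ← map_mul, eW1, eW0]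
  have hreach := hecke_reach (U.natAbs + W.natAbs) U A W x y hx hU0 hW0 hWy le_rfl
  obtain ⟨k, c, h0, hk, hirr, hstep⟩ := chain_of_rtg hreach hx
  exact ⟨k, c, h0, hk, hirr, hstep⟩
end

section
/- Let x, y ∈ K \ ℚ be p-Hecke neighbors in a real quadratic field K (i.e., Λ_y ⊆ Λ_x with index p, where Λ_z = ℤ + ℤz). Then for every unit α ∈ O_x^× there exists an integer 1 ≤ ℓ ≤ p+1 such that α^ℓ ∈ O_y^×, where O_z = {a ∈ K : a·Λ_z ⊆ Λ_z}. -/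
open AddSubgroup in
lemma aux_zmul {V : Type*} [AddCommGroup V] {p : ℕ} (hp : p.Prime)
    (A : AddSubgroup V) (hA : Nat.card A = p) {v : V} (hv : v ∈ A) (h0 : v ≠ 0) :
    AddSubgroup.zmultiples v = A := by
  have hfin : Finite A := Nat.finite_of_card_ne_zero (by simp [hA, hp.ne_zero])
  have hord : addOrderOf v = p := by
    have h1 : addOrderOf (⟨v, hv⟩ : A) ∣ p := hA ▸ addOrderOf_dvd_natCard _
    rw [AddSubgroup.addOrderOf_mk] at h1
    rcases (Nat.Prime.eq_one_or_self_of_dvd hp _ h1) with h | h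
    · exact absurd (AddMonoid.addOrderOf_eq_one_iff.mp h) h0
    · exact h
  have hle : zmultiples v ≤ A := (zmultiples_le).2 hv
  have hc1 : Nat.card (zmultiples v) = p := by rw [Nat.card_zmultiples, hord]
  apply SetLike.ext'
  apply Set.eq_of_subset_of_ncard_le hle
  rw [← Nat.card_coe_set_eq, ← Nat.card_coe_set_eq]
  show Nat.card A ≤ Nat.card (zmultiples v)
  rw [hA, hc1]

lemma aux_pigeon {V : Type*} [AddCommGroup V] {p : ℕ} (hp : p.Prime)
    (hV : Nat.card V = p ^ 2) (W : ℕ → AddSubgroup V)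
    (hW : ∀ n ≤ p + 1, Nat.card (W n) = p) :
    ∃ m n, m < n ∧ n ≤ p + 1 ∧ W m = W n := by
  have hp0 : p ^ 2 ≠ 0 := pow_ne_zero _ hp.ne_zero
  have hfin : Finite V := Nat.finite_of_card_ne_zero (by simp [hV, hp0, hp.ne_zero])
  classical
  have hFt : Fintype V := Fintype.ofFinite V
  by_contra hcon
  push_neg at hcon
  have hne : ∀ m ∈ Finset.range (p+2), ∀ n ∈ Finset.range (p+2), m ≠ n → W m ≠ W n := by
    intro m hm n hn hmn
    rcases lt_or_gt_of_ne hmn with h | h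
    · have hn' : n ≤ p + 1 := by have := Finset.mem_range.mp hn; omega
      exact hcon m n h hn'
    · intro he
      have hm' : m ≤ p + 1 := by have := Finset.mem_range.mp hm; omega
      exact hcon n m h hm' he.symm
  set S : ℕ → Finset V := fun n => ((W n : Set V) \ {0}).toFinset with hS
  have hScard : ∀ n ∈ Finset.range (p+2), (S n).card = p - 1 := by
    intro n hn
    have hn' : n ≤ p + 1 := by have := Finset.mem_range.mp hn; omega
    have : ((W n : Set V) \ {0}).toFinset.card = ((W n : Set V) \ {0}).ncard :=
      (Set.ncard_eq_toFinset_card' _).symm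
    rw [hS, this, Set.ncard_diff_singleton_of_mem (by simpa using (W n).zero_mem : (0:V) ∈ (W n : Set V))]
    rw [← Nat.card_coe_set_eq]
    show Nat.card (W n) - 1 = p - 1
    rw [hW n hn']
  have hdisj : ∀ m ∈ Finset.range (p+2), ∀ n ∈ Finset.range (p+2), m ≠ n →
      Disjoint (S m) (S n) := by
    intro m hm n hn hmn
    rw [Finset.disjoint_left]
    intro v hvm hvn
    simp only [hS, Set.mem_toFinset, Set.mem_diff, Set.mem_singleton_iff] at hvm hvn
    have e1 := aux_zmul hp (W m) (hW m (by have := Finset.mem_range.mp hm; omega)) hvm.1 hvm.2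
    have e2 := aux_zmul hp (W n) (hW n (by have := Finset.mem_range.mp hn; omega)) hvn.1 hvn.2
    exact hne m hm n hn hmn (e1 ▸ e2)
  have hsum : ((Finset.range (p+2)).biUnion S).card = (p+2) * (p-1) := by
    rw [Finset.card_biUnion hdisj]
    rw [Finset.sum_congr rfl hScard]
    simp [mul_comm]
  have hsub : (Finset.range (p+2)).biUnion S ⊆ Finset.univ.erase 0 := by
    intro v hv
    rcases Finset.mem_biUnion.mp hv with ⟨n, _, hvn⟩
    simp only [hS, Set.mem_toFinset, Set.mem_diff, Set.mem_singleton_iff] at hvn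
    exact Finset.mem_erase.mpr ⟨hvn.2, Finset.mem_univ _⟩
  have hcardV : Fintype.card V = p ^ 2 := by rw [← Nat.card_eq_fintype_card, hV]
  have hle := Finset.card_le_card hsub
  rw [hsum, Finset.card_erase_of_mem (Finset.mem_univ _), Finset.card_univ, hcardV] at hle
  have h2 := hp.two_le
  obtain ⟨q, rfl⟩ : ∃ q, p = q + 2 := ⟨p - 2, by omega⟩
  have e1 : (q+2)^2 = q*q+4*q+4 := by ring
  have e2 : (q + 2 + 2) * (q + 2 - 1) = q*q+5*q+4 := by
    have : q + 2 - 1 = q + 1 := by omega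
    rw [this]; ring
  rw [e1, e2] at hle
  omega

lemma aux_cardV {M : Type*} [AddCommGroup M] [Module ℤ M] (b : Module.Basis (Fin 2) ℤ M) (p : ℕ) :
    Nat.card (M ⧸ (LinearMap.range ((p : ℤ) • (LinearMap.id : M →ₗ[ℤ] M)))) = p ^ 2 := by
  classical
  set e := b.equivFun with he
  have hmap : Submodule.map ((e : M ≃ₗ[ℤ] (Fin 2 → ℤ)) : M →ₗ[ℤ] (Fin 2 → ℤ))
      (LinearMap.range ((p : ℤ) • (LinearMap.id : M →ₗ[ℤ] M)))
      = LinearMap.range ((p : ℤ) • (LinearMap.id : (Fin 2 → ℤ) →ₗ[ℤ] (Fin 2 → ℤ))) := by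
    ext z
    constructor
    · rintro ⟨-, ⟨w, rfl⟩, rfl⟩
      exact ⟨e w, by simp⟩
    · rintro ⟨g, rfl⟩
      exact ⟨(p : ℤ) • e.symm g, ⟨e.symm g, rfl⟩, by simp⟩
  have q1 := Submodule.Quotient.equiv _ _ (e : M ≃ₗ[ℤ] (Fin 2 → ℤ)) hmap
  have hpi : LinearMap.range ((p : ℤ) • (LinearMap.id : (Fin 2 → ℤ) →ₗ[ℤ] (Fin 2 → ℤ)))
      = Submodule.pi Set.univ (fun _ : Fin 2 => Ideal.span {(p : ℤ)}) := by
    ext f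
    constructor
    · rintro ⟨g, rfl⟩ i -
      exact Ideal.mem_span_singleton.mpr ⟨g i, rfl⟩
    · intro h
      choose g hg using fun i => Ideal.mem_span_singleton.mp (h i (Set.mem_univ i))
      exact ⟨g, funext fun i => by simp [(hg i).symm]⟩
  rw [hpi] at q1
  have q2 := Submodule.quotientPi (fun _ : Fin 2 => Ideal.span {(p : ℤ)})
  have q3 : (ℤ ⧸ Ideal.span {(p : ℤ)}) ≃ ZMod p := (Int.quotientSpanNatEquivZMod p).toEquiv
  letI : Module ℤ (M ⧸ (LinearMap.range ((p : ℤ) • (LinearMap.id : M →ₗ[ℤ] M)))) :=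
    Submodule.Quotient.module _
  letI : Module ℤ ((Fin 2 → ℤ) ⧸ Submodule.pi Set.univ fun _ : Fin 2 => Ideal.span {(p:ℤ)}) :=
    Submodule.Quotient.module _
  have E1 := q1.toEquiv
  have E2 := q2.toEquiv
  have E3 := Equiv.piCongrRight fun _ : Fin 2 => q3
  have E := (E1.trans E2).trans E3
  rw [Nat.card_congr E, Nat.card_pi]
  simp [Nat.card_zmod, sq]

lemma aux_li {K : Type*} [Field K] [Algebra ℚ K] {x : K}
    (hx : x ∉ Set.range (algebraMap ℚ K)) : LinearIndependent ℤ ![(1 : K), x] := by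
  have : CharZero K := charZero_of_injective_algebraMap (algebraMap ℚ K).injective
  rw [LinearIndependent.pair_iff]
  intro a b hab
  rw [zsmul_eq_mul, zsmul_eq_mul, mul_one] at hab
  by_cases hb : b = 0
  · subst hb
    simp only [Int.cast_zero, zero_mul, add_zero] at hab
    exact ⟨by exact_mod_cast hab, rfl⟩
  · exfalso
    apply hx
    refine ⟨(-a : ℚ) / (b : ℚ), ?_⟩
    have hbK : (b : K) ≠ 0 := Int.cast_ne_zero.mpr hb
    rw [map_div₀, map_neg, map_intCast, map_intCast, div_eq_iff hbK]
    linear_combination -hab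

/-- multiplication by `a` as a `ℤ`-linear map -/
def mulZ {K : Type*} [Field K] (a : K) : K →ₗ[ℤ] K where
  toFun v := a * v
  map_add' := mul_add a
  map_smul' m v := mul_smul_comm m a v

/-- Let `x, y ∈ K \ ℚ` be `p`-Hecke neighbors in a real quadratic field `K`
(i.e. `Λ_y ⊆ Λ_x` with index `p`, where `Λ_z = ℤ + ℤz`). Then for every unit
`α ∈ O_x^×` there exists an integer `1 ≤ ℓ ≤ p + 1` such that `α^ℓ ∈ O_y^×`,
where `O_z = {a ∈ K : a·Λ_z ⊆ Λ_z}`. -/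
theorem stmt_10 (K : Type*) [Field K] [Algebra ℚ K] [FiniteDimensional ℚ K]
    (h2 : Module.finrank ℚ K = 2) (σ : K →+* ℝ)
    (p : ℕ) (hp : p.Prime)
    (x y : K)
    (hx : x ∉ Set.range (algebraMap ℚ K)) (hy : y ∉ Set.range (algebraMap ℚ K))
    (hsub : Submodule.span ℤ ({1, y} : Set K) ≤ Submodule.span ℤ ({1, x} : Set K))
    (hidx : Nat.card ((Submodule.span ℤ ({1, x} : Set K)) ⧸
        ((Submodule.span ℤ ({1, y} : Set K)).comap
          (Submodule.span ℤ ({1, x} : Set K)).subtype)) = p)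
    (α : K)
    (hα : ∀ v ∈ Submodule.span ℤ ({1, x} : Set K), α * v ∈ Submodule.span ℤ ({1, x} : Set K))
    (hαinv : ∀ v ∈ Submodule.span ℤ ({1, x} : Set K),
      α⁻¹ * v ∈ Submodule.span ℤ ({1, x} : Set K)) :
    ∃ ℓ : ℕ, 1 ≤ ℓ ∧ ℓ ≤ p + 1 ∧
      (∀ v ∈ Submodule.span ℤ ({1, y} : Set K), α ^ ℓ * v ∈ Submodule.span ℤ ({1, y} : Set K)) ∧
      (∀ v ∈ Submodule.span ℤ ({1, y} : Set K),
        (α ^ ℓ)⁻¹ * v ∈ Submodule.span ℤ ({1, y} : Set K)) := by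
  classical
  set X := Submodule.span ℤ ({1, x} : Set K) with hXdef
  set Y := Submodule.span ℤ ({1, y} : Set K) with hYdef
  by_cases hα0 : α = 0
  · refine ⟨1, le_refl _, by omega, ?_, ?_⟩ <;> intro v hv <;>
      simp only [pow_one, hα0, zero_mul, inv_zero] <;> exact Y.zero_mem
  -- powers of α preserve X
  have hpowX : ∀ n, ∀ v ∈ X, α ^ n * v ∈ X := by
    intro n
    induction n with
    | zero => intro v hv; simpa using hv
    | succ n ih =>
      intro v hv
      have : α ^ (n + 1) * v = α ^ n * (α * v) := by rw [pow_succ]; ring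
      rw [this]
      exact ih _ (hα v hv)
  have hpowXinv : ∀ n, ∀ v ∈ X, (α ^ n)⁻¹ * v ∈ X := by
    intro n
    induction n with
    | zero => intro v hv; simpa using hv
    | succ n ih =>
      intro v hv
      have : (α ^ (n + 1))⁻¹ * v = (α ^ n)⁻¹ * (α⁻¹ * v) := by
        rw [pow_succ, mul_inv_rev]; ring
      rw [this]
      exact ih _ (hαinv v hv)
  set L : ℕ → Submodule ℤ K := fun n => Submodule.map (mulZ (α ^ n)) Y with hLdef
  have hmemL : ∀ n (v : K), v ∈ L n ↔ ∃ w ∈ Y, α ^ n * w = v := by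
    intro n v
    simp [hLdef, Submodule.mem_map, mulZ]
  have hL0 : L 0 = Y := by
    ext v
    rw [hmemL]
    constructor
    · rintro ⟨w, hw, rfl⟩; simpa using hw
    · intro hv; exact ⟨v, hv, by simp⟩
  have hLX : ∀ n, L n ≤ X := by
    intro n v hv
    rw [hmemL] at hv
    obtain ⟨w, hw, rfl⟩ := hv
    exact hpowX n w (hsub hw)
  set Yn : ℕ → Submodule ℤ X := fun n => (L n).comap X.subtype with hYndef
  set P : Submodule ℤ X := LinearMap.range ((p : ℤ) • (LinearMap.id : X →ₗ[ℤ] X)) with hPdef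
  have hidx0 : Nat.card (X ⧸ Yn 0) = p := by
    have : Yn 0 = Y.comap X.subtype := by rw [hYndef]; simp only; rw [hL0]
    rw [this]
    exact hidx
  -- p kills X/Y
  have hpY : ∀ v : X, ((p : ℤ) • v) ∈ Yn 0 := by
    intro v
    have hfin : Finite (X ⧸ Yn 0) :=
      Nat.finite_of_card_ne_zero (by rw [hidx0]; exact hp.ne_zero)
    have h1 : addOrderOf (Submodule.Quotient.mk v : X ⧸ Yn 0) ∣ p := by
      rw [← hidx0]; exact addOrderOf_dvd_natCard _
    have h2 : p • (Submodule.Quotient.mk v : X ⧸ Yn 0) = 0 :=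
      addOrderOf_dvd_iff_nsmul_eq_zero.mp h1
    have h3 : (Submodule.Quotient.mk ((p : ℕ) • v) : X ⧸ Yn 0) = 0 := by
      rw [← h2]; rfl
    rw [natCast_zsmul]
    exact (Submodule.Quotient.mk_eq_zero _).mp h3
  have hpL : ∀ n (v : X), ((p : ℤ) • (v : K)) ∈ L n := by
    intro n v
    have h1 : (α ^ n)⁻¹ * v ∈ X := hpowXinv n v v.2
    have h2 := hpY ⟨(α ^ n)⁻¹ * v, h1⟩
    have h3 : ((p : ℤ) • ((α ^ n)⁻¹ * (v : K))) ∈ Y := by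
      have := h2
      rw [hYndef] at this
      simp only [Submodule.mem_comap] at this
      rw [hL0] at this
      exact this
    rw [hmemL]
    refine ⟨(p : ℤ) • ((α ^ n)⁻¹ * (v : K)), h3, ?_⟩
    have hne : α ^ n ≠ 0 := pow_ne_zero n hα0
    rw [mul_smul_comm]
    congr 1
    field_simp
  have hPYn : ∀ n, P ≤ Yn n := by
    intro n w hw
    rw [hPdef] at hw
    obtain ⟨u, rfl⟩ := hw
    show ((((p : ℤ) • (LinearMap.id : X →ₗ[ℤ] X)) u : X) : K) ∈ L n
    simpa using hpL n u
  -- cardinality of V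
  have hli : LinearIndependent ℤ ![(1 : K), x] := aux_li hx
  have hrange : Set.range ![(1 : K), x] = {1, x} := by
    ext v
    constructor
    · rintro ⟨i, rfl⟩; fin_cases i <;> simp
    · rintro (rfl | rfl)
      · exact ⟨0, rfl⟩
      · exact ⟨1, rfl⟩
  have hXeq : Submodule.span ℤ (Set.range ![(1 : K), x]) = X := by rw [hrange]
  have b : Module.Basis (Fin 2) ℤ X := (Module.Basis.span hli).map (LinearEquiv.ofEq _ _ hXeq)
  have hcardV : Nat.card (X ⧸ P) = p ^ 2 := aux_cardV b p
  set W : ℕ → Submodule ℤ (X ⧸ P) := fun n => (Yn n).map P.mkQ with hWdef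
  have hfinV : Finite (X ⧸ P) :=
    Nat.finite_of_card_ne_zero (by rw [hcardV]; exact pow_ne_zero 2 hp.ne_zero)
  have hq0 : Nat.card ((X ⧸ P) ⧸ W 0) = p := by
    letI : Module ℤ ((X ⧸ P) ⧸ W 0) := Submodule.Quotient.module _
    letI : Module ℤ (X ⧸ Yn 0) := Submodule.Quotient.module _
    have e := Submodule.quotientQuotientEquivQuotient P (Yn 0) (hPYn 0)
    rw [Nat.card_congr e.toEquiv, hidx0]
  have hW0 : Nat.card (W 0) = p := by
    have h := AddSubgroup.card_eq_card_quotient_mul_card_addSubgroup (W 0).toAddSubgroup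
    have h1 : Nat.card ((X ⧸ P) ⧸ (W 0).toAddSubgroup) = Nat.card ((X ⧸ P) ⧸ W 0) := rfl
    have h2 : Nat.card (W 0).toAddSubgroup = Nat.card (W 0) := rfl
    rw [h1, h2, hq0, hcardV] at h
    rw [sq] at h
    exact (Nat.eq_of_mul_eq_mul_left hp.pos h).symm
  -- the automorphism of X induced by multiplication by α
  set r : X ≃ₗ[ℤ] X :=
    { toFun := fun v => ⟨α * v, hα v v.2⟩
      invFun := fun v => ⟨α⁻¹ * v, hαinv v v.2⟩
      left_inv := fun v => by
        apply Subtype.ext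
        show α⁻¹ * (α * (v : K)) = v
        field_simp
      right_inv := fun v => by
        apply Subtype.ext
        show α * (α⁻¹ * (v : K)) = v
        field_simp
      map_add' := fun v w => by
        apply Subtype.ext
        show α * ((v : K) + w) = α * v + α * w
        ring
      map_smul' := fun m v => by
        apply Subtype.ext
        show α * (m • (v : K)) = m • (α * v)
        rw [mul_smul_comm] } with hrdef
  have hrP : P.map (r : X →ₗ[ℤ] X) = P := by
    apply le_antisymm
    · rintro w ⟨u, hu, rfl⟩
      rw [hPdef] at hu
      obtain ⟨z, rfl⟩ := hu
      refine ⟨r z, ?_⟩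
      show (p : ℤ) • r z = r ((p : ℤ) • (LinearMap.id : X →ₗ[ℤ] X) z)
      rw [map_smul]
      rfl
    · rintro w hw
      rw [hPdef] at hw
      obtain ⟨z, rfl⟩ := hw
      refine ⟨(p : ℤ) • r.symm z, ⟨r.symm z, rfl⟩, ?_⟩
      rw [map_smul]
      simp
  set ebar := Submodule.Quotient.equiv P P r hrP with hebardef
  have hYsucc : ∀ n, Yn (n + 1) = (Yn n).map (r : X →ₗ[ℤ] X) := by
    intro n
    ext v
    constructor
    · intro hv
      have hv' : (v : K) ∈ L (n + 1) := hv
      rw [hmemL] at hv'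
      obtain ⟨u, hu, huv⟩ := hv'
      have hwX : α ^ n * u ∈ X := hpowX n u (hsub hu)
      refine ⟨⟨α ^ n * u, hwX⟩, ?_, ?_⟩
      · show (⟨α ^ n * u, hwX⟩ : X).val ∈ L n
        rw [hmemL]
        exact ⟨u, hu, rfl⟩
      · apply Subtype.ext
        show α * (α ^ n * u) = (v : K)
        rw [← huv, pow_succ]
        ring
    · rintro ⟨w, hw, rfl⟩
      have hw' : (w : K) ∈ L n := hw
      rw [hmemL] at hw'
      obtain ⟨u, hu, huw⟩ := hw'
      show ((r w : X) : K) ∈ L (n + 1)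
      rw [hmemL]
      refine ⟨u, hu, ?_⟩
      show α ^ (n + 1) * u = α * (w : K)
      rw [← huw, pow_succ]
      ring
  have hcomm : P.mkQ.comp (r : X →ₗ[ℤ] X) = (ebar : (X ⧸ P) →ₗ[ℤ] X ⧸ P).comp P.mkQ := by
    apply LinearMap.ext
    intro v
    rfl
  have hWsucc : ∀ n, W (n + 1) = (W n).map (ebar : (X ⧸ P) →ₗ[ℤ] X ⧸ P) := by
    intro n
    show Submodule.map P.mkQ (Yn (n + 1)) = _
    rw [hYsucc n, ← Submodule.map_comp, hcomm, Submodule.map_comp]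
  have hWcard : ∀ n, Nat.card (W n) = p := by
    intro n
    induction n with
    | zero => exact hW0
    | succ n ih =>
      rw [hWsucc n, ← ih]
      exact (Nat.card_congr (ebar.submoduleMap (W n)).toEquiv).symm
  -- pigeonhole
  obtain ⟨m, n, hmn, hnle, hWeq⟩ :=
    aux_pigeon hp hcardV (fun n => (W n).toAddSubgroup)
      (fun n _ => by
        have h2 : Nat.card (W n).toAddSubgroup = Nat.card (W n) := rfl
        rw [h2]; exact hWcard n)
  have hWeq' : W m = W n := by
    apply SetLike.ext'
    exact congrArg (fun (A : AddSubgroup (X ⧸ P)) => (A : Set (X ⧸ P))) hWeq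
  have hYeq : Yn m = Yn n := by
    have h1 : Submodule.comap P.mkQ (W m) = Yn m := by
      rw [hWdef]
      simp only
      rw [Submodule.comap_map_mkQ]
      exact sup_eq_right.mpr (hPYn m)
    have h2 : Submodule.comap P.mkQ (W n) = Yn n := by
      rw [hWdef]
      simp only
      rw [Submodule.comap_map_mkQ]
      exact sup_eq_right.mpr (hPYn n)
    rw [← h1, ← h2, hWeq']
  have hLeq : L m = L n := by
    have h1 : Submodule.map X.subtype (Yn m) = L m := by
      rw [hYndef]
      simp only
      rw [Submodule.map_comap_subtype]
      exact inf_eq_right.mpr (hLX m)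
    have h2 : Submodule.map X.subtype (Yn n) = L n := by
      rw [hYndef]
      simp only
      rw [Submodule.map_comap_subtype]
      exact inf_eq_right.mpr (hLX n)
    rw [← h1, ← h2, hYeq]
  -- conclude
  refine ⟨n - m, by omega, by omega, ?_, ?_⟩
  · intro v hv
    have h1 : α ^ n * v ∈ L n := (hmemL n _).mpr ⟨v, hv, rfl⟩
    rw [← hLeq, hmemL] at h1
    obtain ⟨w, hw, hwe⟩ := h1
    have hmne : α ^ m ≠ 0 := pow_ne_zero m hα0
    have : α ^ (n - m) * v = w := by
      apply mul_left_cancel₀ hmne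
      rw [hwe]
      rw [← mul_assoc, ← pow_add]
      congr 2
      omega
    rw [this]
    exact hw
  · intro v hv
    have h1 : α ^ m * v ∈ L m := (hmemL m _).mpr ⟨v, hv, rfl⟩
    rw [hLeq, hmemL] at h1
    obtain ⟨w, hw, hwe⟩ := h1
    have hmne : α ^ m ≠ 0 := pow_ne_zero m hα0
    have hlne : α ^ (n - m) ≠ 0 := pow_ne_zero _ hα0
    have : (α ^ (n - m))⁻¹ * v = w := by
      rw [inv_mul_eq_iff_eq_mul₀ hlne]
      apply mul_left_cancel₀ hmne
      rw [← hwe, ← mul_assoc, ← pow_add]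
      congr 2
      omega
    rw [this]
    exact hw
end

section
/- Let x, y ∈ K \ ℚ be p-Hecke neighbors in a real quadratic field K. Let l_z denote the unique positive integer such that O_z = ℤ[l_z · x_D], where ℤ[x_D] is the maximal order of K. Then l_y divides p·l_x and l_x divides p·l_y; in particular (1/p)·l_y ≤ l_x ≤ p·l_y. -/
open Submodule Polynomial

/-- span ℤ {1, t} is closed under multiplication, given t² in it. -/
lemma mul_mem_span_pair_one {K : Type*} [Field K] {t : K}
    (ht : t * t ∈ Submodule.span ℤ ({1, t} : Set K))
    {u v : K} (hu : u ∈ Submodule.span ℤ ({1, t} : Set K))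
    (hv : v ∈ Submodule.span ℤ ({1, t} : Set K)) :
    u * v ∈ Submodule.span ℤ ({1, t} : Set K) := by
  have h1 : (1 : K) ∈ Submodule.span ℤ ({1, t} : Set K) :=
    Submodule.subset_span (by simp)
  have hts : t ∈ Submodule.span ℤ ({1, t} : Set K) :=
    Submodule.subset_span (by simp)
  have key : ∀ w ∈ Submodule.span ℤ ({1, t} : Set K),
      t * w ∈ Submodule.span ℤ ({1, t} : Set K) := by
    intro w hw
    induction hw using Submodule.span_induction with
    | mem z hz =>
      rcases hz with rfl | rfl
      · simpa using hts
      · exact ht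
    | zero => simpa using (Submodule.zero_mem _)
    | add a b _ _ ha hb => rw [mul_add]; exact Submodule.add_mem _ ha hb
    | smul c a _ ha => rw [mul_smul_comm]; exact Submodule.smul_mem _ c ha
  induction hu using Submodule.span_induction with
  | mem z hz =>
    rcases hz with rfl | rfl
    · simpa using hv
    · exact key v hv
  | zero => simpa using (Submodule.zero_mem _)
  | add a b _ _ ha hb => rw [add_mul]; exact Submodule.add_mem _ ha hb
  | smul c a _ ha => rw [smul_mul_assoc]; exact Submodule.smul_mem _ c ha

lemma adjoin_subset_span_pair {K : Type*} [Field K] {t : K}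
    (ht : t * t ∈ Submodule.span ℤ ({1, t} : Set K)) :
    (Algebra.adjoin ℤ ({t} : Set K) : Set K) ⊆ Submodule.span ℤ ({1, t} : Set K) := by
  intro a ha
  induction ha using Algebra.adjoin_induction with
  | mem z hz =>
    rcases hz with rfl
    exact Submodule.subset_span (by simp)
  | algebraMap r =>
    have : (algebraMap ℤ K r) = r • (1 : K) := by simp
    rw [this]
    exact Submodule.smul_mem _ r (Submodule.subset_span (by simp))
  | add a b _ _ ha hb => exact Submodule.add_mem _ ha hb
  | mul a b _ _ ha hb => exact mul_mem_span_pair_one ht ha hb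

/-- Let `x, y ∈ K \ ℚ` be `p`-Hecke neighbors in a real quadratic field `K` with maximal
order `ℤ[x_D]`. Let `l_z` denote the unique positive integer such that
`O_z = ℤ[l_z·x_D]`, where `O_z` is the multiplier ring of `Λ_z = ℤ + ℤz`. Then `l_y ∣ p·l_x`
and `l_x ∣ p·l_y`; in particular `(1/p)·l_y ≤ l_x ≤ p·l_y`. -/
theorem stmt_11 (K : Type*) [Field K] [Algebra ℚ K] [FiniteDimensional ℚ K]
    (h2 : Module.finrank ℚ K = 2) (σ : K →+* ℝ)
    (xD : K) (hmax : Algebra.adjoin ℤ {xD} = integralClosure ℤ K)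
    (p : ℕ) (hp : p.Prime)
    (x y : K)
    (hx : x ∉ Set.range (algebraMap ℚ K)) (hy : y ∉ Set.range (algebraMap ℚ K))
    (hsub : Submodule.span ℤ ({1, y} : Set K) ≤ Submodule.span ℤ ({1, x} : Set K))
    (hidx : Nat.card ((Submodule.span ℤ ({1, x} : Set K)) ⧸
        ((Submodule.span ℤ ({1, y} : Set K)).comap
          (Submodule.span ℤ ({1, x} : Set K)).subtype)) = p)
    (lx ly : ℕ) (hlx : 0 < lx) (hly : 0 < ly)
    (hOx : {a : K | ∀ v ∈ Submodule.span ℤ ({1, x} : Set K),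
        a * v ∈ Submodule.span ℤ ({1, x} : Set K)} =
      (Algebra.adjoin ℤ ({(lx : K) * xD} : Set K) : Set K))
    (hOy : {a : K | ∀ v ∈ Submodule.span ℤ ({1, y} : Set K),
        a * v ∈ Submodule.span ℤ ({1, y} : Set K)} =
      (Algebra.adjoin ℤ ({(ly : K) * xD} : Set K) : Set K)) :
    ly ∣ p * lx ∧ lx ∣ p * ly ∧ ly ≤ p * lx ∧ lx ≤ p * ly := by
  haveI : CharZero K := charZero_of_injective_algebraMap (algebraMap ℚ K).injective
  -- xD is not rational
  have hxDnr : xD ∉ Set.range (algebraMap ℚ K) := by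
    rintro ⟨q, hq⟩
    -- then adjoin ℤ {xD} ⊆ range of algebraMap ℚ K
    have hsubalg : (Algebra.adjoin ℤ ({xD} : Set K) : Set K) ⊆ Set.range (algebraMap ℚ K) := by
      have : Algebra.adjoin ℤ ({xD} : Set K) ≤
          (Subalgebra.restrictScalars ℤ (⊥ : Subalgebra ℚ K)) := by
        apply Algebra.adjoin_le
        intro z hz
        rcases hz with rfl
        show z ∈ (⊥ : Subalgebra ℚ K)
        rw [Algebra.mem_bot]
        exact ⟨q, hq⟩
      intro a ha
      have := this ha
      rw [Subalgebra.mem_restrictScalars, Algebra.mem_bot] at this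
      exact this
    -- x has an integral multiple
    have halgQ : IsAlgebraic ℚ x := (Algebra.IsAlgebraic.of_finite ℚ K).isAlgebraic x
    have halg : IsAlgebraic ℤ x := (IsFractionRing.isAlgebraic_iff ℤ ℚ K).mpr halgQ
    obtain ⟨n, hn, hint⟩ := halg.exists_integral_multiple
    obtain ⟨z, hzn⟩ : ∃ z : integralClosure ℤ K, algebraMap ℤ K n * x = z :=
      ⟨⟨n • x, hint⟩, by show _ = n • x; rw [Algebra.smul_def]⟩
    have hz : (z : K) ∈ Set.range (algebraMap ℚ K) := by
      apply hsubalg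
      show (z : K) ∈ Algebra.adjoin ℤ ({xD} : Set K)
      rw [hmax]
      exact z.2
    rcases hz with ⟨qz, hqz⟩
    apply hx
    refine ⟨qz / (n : ℚ), ?_⟩
    have hnK : ((n : ℚ) : K) ≠ 0 := by
      exact_mod_cast hn
    rw [map_div₀, hqz, ← hzn]
    have hcast : (algebraMap ℚ K) (n : ℚ) = ((n : ℚ) : K) := eq_ratCast _ _
    have hcast2 : (algebraMap ℤ K) n = ((n : ℚ) : K) := by
      rw [eq_intCast (algebraMap ℤ K)]
      push_cast
      ring
    rw [hcast, hcast2]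
    exact mul_div_cancel_left₀ x hnK
  -- linear independence of 1, xD over ℤ
  have hindep : ∀ m c : ℤ, (m : K) + (c : K) * xD = 0 → c = 0 := by
    intro m c h
    by_contra hc
    apply hxDnr
    refine ⟨(-m : ℚ) / (c : ℚ), ?_⟩
    have hcK : (c : K) ≠ 0 := Int.cast_ne_zero.mpr hc
    have hcQ : ((c : ℚ) : K) ≠ 0 := by push_cast; exact hcK
    have hmapc : (algebraMap ℚ K) (c : ℚ) = (c : K) := by
      rw [eq_ratCast (algebraMap ℚ K)]; push_cast; ring
    have hmapm : (algebraMap ℚ K) (-m : ℚ) = (-m : K) := by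
      rw [eq_ratCast (algebraMap ℚ K)]; push_cast; ring
    rw [map_div₀, hmapc, hmapm, div_eq_iff hcK]
    push_cast
    linear_combination -h
  -- xD is integral over ℤ and its minimal polynomial has degree 2
  have hDint : IsIntegral ℤ xD := by
    have : xD ∈ integralClosure ℤ K := by
      rw [← hmax]; exact Algebra.self_mem_adjoin_singleton ℤ xD
    exact this
  have hdeg2 : (minpoly ℤ xD).natDegree = 2 := by
    have heq : minpoly ℚ xD = (minpoly ℤ xD).map (algebraMap ℤ ℚ) :=
      minpoly.isIntegrallyClosed_eq_field_fractions ℚ K hDint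
    have hQdeg : (minpoly ℚ xD).natDegree = 2 := by
      have hle : (minpoly ℚ xD).natDegree ≤ 2 := h2 ▸ minpoly.natDegree_le xD
      have hge : 2 ≤ (minpoly ℚ xD).natDegree :=
        (minpoly.two_le_natDegree_iff (Algebra.IsIntegral.isIntegral xD)).mpr hxDnr
      omega
    rw [heq, Polynomial.natDegree_map_eq_of_injective
      (algebraMap ℤ ℚ).injective_int] at hQdeg
    exact hQdeg
  -- xD² = -c0 - c1 * xD with integer coefficients
  obtain ⟨c0, c1, hquad⟩ : ∃ c0 c1 : ℤ, xD * xD = (c0 : K) + (c1 : K) * xD := by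
    have hmonic := minpoly.monic hDint
    have haev := minpoly.aeval ℤ xD
    set f := minpoly ℤ xD with hf
    have hsum : (Polynomial.aeval xD) f =
        ∑ i ∈ Finset.range (2 + 1), f.coeff i • xD ^ i := by
      rw [Polynomial.aeval_eq_sum_range' (n := 2 + 1) (by omega)]
    have hlead : f.coeff 2 = 1 := by
      have := hmonic.leadingCoeff
      rwa [Polynomial.leadingCoeff, hdeg2] at this
    rw [haev] at hsum
    refine ⟨-f.coeff 0, -f.coeff 1, ?_⟩
    simp only [Finset.sum_range_succ, Finset.sum_range_zero, hlead, one_smul,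
      zsmul_eq_mul] at hsum
    push_cast
    rw [← sq]
    linear_combination -hsum
  -- t² ∈ span {1, t} for t = l * xD
  have hsq : ∀ l : ℕ, ((l : K) * xD) * ((l : K) * xD) ∈
      Submodule.span ℤ ({1, (l : K) * xD} : Set K) := by
    intro l
    rw [Submodule.mem_span_pair]
    refine ⟨(l : ℤ)^2 * c0, (l : ℤ) * c1, ?_⟩
    push_cast [zsmul_eq_mul]
    linear_combination (-((l:K)^2)) * hquad
  -- p • Λx ⊆ Λy
  set Λx := Submodule.span ℤ ({1, x} : Set K) with hΛx
  set Λy := Submodule.span ℤ ({1, y} : Set K) with hΛy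
  have hpscale : ∀ v ∈ Λx, (p : K) * v ∈ Λy := by
    intro v hv
    set N := Λy.comap Λx.subtype with hN
    haveI : Finite (Λx ⧸ N) := Nat.finite_of_card_ne_zero (by rw [hidx]; exact hp.ne_zero)
    have hq : p • (Submodule.Quotient.mk (⟨v, hv⟩ : Λx) : Λx ⧸ N) = 0 := by
      rw [← hidx]; exact card_nsmul_eq_zero'
    rw [← Submodule.Quotient.mk_smul, Submodule.Quotient.mk_eq_zero] at hq
    have : (p • (⟨v, hv⟩ : Λx) : Λx) ∈ N := hq
    rw [hN, Submodule.mem_comap] at this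
    simpa [nsmul_eq_mul] using this
  -- the multiplier-set inclusions
  have hmulx : ∀ a ∈ {a : K | ∀ v ∈ Λx, a * v ∈ Λx}, (p : K) * a ∈ {a : K | ∀ v ∈ Λy, a * v ∈ Λy} := by
    intro a ha v hv
    have h1 : a * v ∈ Λx := ha v (hsub hv)
    have h2 := hpscale _ h1
    have heq : (p : K) * a * v = (p : K) * (a * v) := by ring
    rw [heq]
    exact h2
  have hmuly : ∀ a ∈ {a : K | ∀ v ∈ Λy, a * v ∈ Λy}, (p : K) * a ∈ {a : K | ∀ v ∈ Λx, a * v ∈ Λx} := by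
    intro a ha v hv
    have h1 : (p : K) * v ∈ Λy := hpscale v hv
    have h2 : a * ((p : K) * v) ∈ Λy := ha _ h1
    have h3 := hsub h2
    have heq : (p : K) * a * v = a * ((p : K) * v) := by ring
    rw [heq]
    exact h3
  -- divisibility extraction
  have key : ∀ (l1 l2 : ℕ), 0 < l2 →
      ((p : K) * ((l1 : K) * xD)) ∈ Submodule.span ℤ ({1, (l2 : K) * xD} : Set K) →
      l2 ∣ p * l1 := by
    intro l1 l2 hl2 hmem
    rw [Submodule.mem_span_pair] at hmem
    obtain ⟨m, n, hmn⟩ := hmem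
    have : (m : K) + ((n * l2 - p * l1 : ℤ) : K) * xD = 0 := by
      push_cast
      push_cast [zsmul_eq_mul] at hmn
      linear_combination hmn
    have hc := hindep m _ this
    have : (n : ℤ) * l2 = (p : ℤ) * l1 := by omega
    have : (l2 : ℤ) ∣ (p * l1 : ℕ) := by
      push_cast
      exact ⟨n, by linarith⟩
    exact_mod_cast this
  -- apply to both directions
  have hlxmem : (lx : K) * xD ∈ {a : K | ∀ v ∈ Λx, a * v ∈ Λx} := by
    rw [hΛx, hOx]
    exact Algebra.self_mem_adjoin_singleton ℤ _
  have hlymem : (ly : K) * xD ∈ {a : K | ∀ v ∈ Λy, a * v ∈ Λy} := by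
    rw [hΛy, hOy]
    exact Algebra.self_mem_adjoin_singleton ℤ _
  have h1 : ly ∣ p * lx := by
    apply key lx ly hly
    have := hmulx _ hlxmem
    rw [hΛy, hOy] at this
    exact adjoin_subset_span_pair (hsq ly) this
  have h2 : lx ∣ p * ly := by
    apply key ly lx hlx
    have := hmuly _ hlymem
    rw [hΛx, hOx] at this
    exact adjoin_subset_span_pair (hsq lx) this
  exact ⟨h1, h2, Nat.le_of_dvd (Nat.mul_pos hp.pos hlx) h1, Nat.le_of_dvd (Nat.mul_pos hp.pos hly) h2⟩
end
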